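/- If f ∈ L²(ℝ) belongs to a sampling space, then the sequence of samples {f(k)}_{k∈ℤ} belongs to ℓ²(ℤ). -/

import Mathlib

open MeasureTheory Complex Filter FourierTransform

noncomputable section

/-- The Fourier transform `f̂(ω) = ∫ f(x) e^{-2πixω} dx`. -/
def FT (f : ℝ → ℂ) : ℝ → ℂ := 𝓕 f

/-- The translate `f(· - k)`. -/
def tr (k : ℤ) (f : ℝ → ℂ) : ℝ → ℂ := fun x => f (x - k)

/-- The grammian `G_f(ω) = Σ_k |f̂(ω+k)|²`. -/
def Gram (f : ℝ → ℂ) (ω : ℝ) : ℝ := ∑' k : ℤ, ‖FT f (ω + k)‖ ^ 2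

/-- `E_f = {ω : G_f(ω) > 0}`. -/
def Eset (f : ℝ → ℂ) : Set ℝ := {ω | 0 < Gram f ω}

/-- The Zak transform `Z_f(x,ω) = Σ_k f(x+k) e^{-2πikω}`. -/
def Zak (f : ℝ → ℂ) (x ω : ℝ) : ℂ :=
  ∑' k : ℤ, f (x + k) * Complex.exp (((-2 * Real.pi * k * ω : ℝ) : ℂ) * Complex.I)

/-- The `L²` inner product of two functions on `ℝ`. -/
def ip (f g : ℝ → ℂ) : ℂ := ∫ x : ℝ, f x * (starRingEnd ℂ) (g x)

/-- Membership in `L²(ℝ)`. -/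
def L2fun (f : ℝ → ℂ) : Prop := MemLp f 2 (volume : Measure ℝ)

/-- The shift invariant space `S(ψ)`: the `L²`-closure of the span of the integer
translates of `ψ`, as a set of elements of `Lp`. -/
def SISset (ψ : ℝ → ℂ) : Set (Lp ℂ 2 (volume : Measure ℝ)) :=
  closure (Submodule.span ℂ
    {g : Lp ℂ 2 (volume : Measure ℝ) | ∃ k : ℤ, (g : ℝ → ℂ) =ᵐ[volume] tr k ψ} : Set _)

/-- `f` belongs (as an a.e. class) to the shift invariant space `S(ψ)`. -/
def memSIS (ψ f : ℝ → ℂ) : Prop :=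
  ∃ g ∈ SISset ψ, (g : ℝ → ℂ) =ᵐ[volume] f

/-- The translates of `s` form a frame (with bounds `A`, `B`) for the space `S(ψ)`. -/
def IsFrameOf (s ψ : ℝ → ℂ) : Prop :=
  ∃ A B : ℝ, 0 < A ∧ 0 < B ∧ ∀ f : ℝ → ℂ, L2fun f → memSIS ψ f →
    A * (∫ x : ℝ, ‖f x‖ ^ 2) ≤ (∑' k : ℤ, ‖ip f (tr k s)‖ ^ 2) ∧
    (∑' k : ℤ, ‖ip f (tr k s)‖ ^ 2) ≤ B * (∫ x : ℝ, ‖f x‖ ^ 2)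

/-- `s` is a sampling function for the sampling space `V(ψ) = S(ψ)`. -/
structure IsSamplingFunction (ψ s : ℝ → ℂ) : Prop where
  /-- `s` belongs to `V(ψ)`. -/
  memV : L2fun s ∧ memSIS ψ s
  /-- The translates of `s` form a frame of `V(ψ)`. -/
  frame : IsFrameOf s ψ
  /-- For every `ℓ²` sequence, `Σ c_k s(·-k)` converges pointwise (indeed uniformly)
  to a continuous function. -/
  ptconv : ∀ c : ℤ → ℂ, Summable (fun k : ℤ => ‖c k‖ ^ 2) →
    ∃ g : ℝ → ℂ, Continuous g ∧
      TendstoUniformly (fun (F : Finset ℤ) (x : ℝ) => ∑ k ∈ F, c k * s (x - k)) g atTop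
  /-- Every `f ∈ V(ψ)` has a continuous representative `g` with
  `g = Σ_k g(k) s(·-k)`, uniformly and in `L²`. -/
  recon : ∀ f : ℝ → ℂ, L2fun f → memSIS ψ f →
    ∃ g : ℝ → ℂ, Continuous g ∧ g =ᵐ[volume] f ∧
      TendstoUniformly (fun (F : Finset ℤ) (x : ℝ) => ∑ k ∈ F, g k * s (x - k)) g atTop ∧
      Tendsto (fun F : Finset ℤ =>
          eLpNorm (fun x => g x - ∑ k ∈ F, g k * s (x - k)) 2 (volume : Measure ℝ))
        atTop (nhds 0)

/-- `V(ψ)` is a sampling space. -/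
def IsSamplingSpace (ψ : ℝ → ℂ) : Prop := ∃ s : ℝ → ℂ, IsSamplingFunction ψ s

end

/-- Orlicz: an unconditionally summable family in a (complex) inner product space has
square-summable norms. -/
lemma orlicz_sq_summable {E : Type*} [NormedAddCommGroup E] [InnerProductSpace ℂ E]
    [CompleteSpace E] (x : ℤ → E) (hx : Summable x) : Summable fun k : ℤ => ‖x k‖ ^ 2 := by
  classical
  -- uniform bound on partial sums
  obtain ⟨F₀, hF₀⟩ := summable_iff_vanishing_norm.1 hx 1 one_pos
  set C : ℝ := (∑ k ∈ F₀, ‖x k‖) + 1 with hCdef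
  have hC : ∀ F : Finset ℤ, ‖∑ k ∈ F, x k‖ ≤ C := by
    intro F
    have hsplit : ∑ k ∈ F ∩ F₀, x k + ∑ k ∈ F \ F₀, x k = ∑ k ∈ F, x k :=
      Finset.sum_inter_add_sum_sdiff F F₀ x
    calc ‖∑ k ∈ F, x k‖ = ‖∑ k ∈ F ∩ F₀, x k + ∑ k ∈ F \ F₀, x k‖ := by rw [hsplit]
      _ ≤ ‖∑ k ∈ F ∩ F₀, x k‖ + ‖∑ k ∈ F \ F₀, x k‖ := norm_add_le _ _
      _ ≤ (∑ k ∈ F₀, ‖x k‖) + 1 := by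
          refine add_le_add ?_ (le_of_lt (hF₀ _ Finset.sdiff_disjoint))
          exact (norm_sum_le _ _).trans (Finset.sum_le_sum_of_subset_of_nonneg
            Finset.inter_subset_right (fun i _ _ => norm_nonneg _))
  -- signed partial sums are bounded by 2C
  have hsign : ∀ (F : Finset ℤ) (ε : ℤ → ℝ), (∀ k, ε k = 1 ∨ ε k = -1) →
      ‖∑ k ∈ F, ε k • x k‖ ≤ 2 * C := by
    intro F ε hε
    have h1 : ∑ k ∈ F.filter (fun k => ε k = 1), ε k • x k
        = ∑ k ∈ F.filter (fun k => ε k = 1), x k :=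
      Finset.sum_congr rfl fun k hk => by rw [(Finset.mem_filter.1 hk).2, one_smul]
    have h2 : ∑ k ∈ F.filter (fun k => ¬ ε k = 1), ε k • x k
        = -∑ k ∈ F.filter (fun k => ¬ ε k = 1), x k := by
      rw [← Finset.sum_neg_distrib]
      refine Finset.sum_congr rfl fun k hk => ?_
      have hk' := (Finset.mem_filter.1 hk).2
      rcases hε k with h | h
      · exact absurd h hk'
      · rw [h, neg_smul, one_smul]
    have hrw : ∑ k ∈ F, ε k • x k
        = (∑ k ∈ F.filter (fun k => ε k = 1), x k)
          - ∑ k ∈ F.filter (fun k => ¬ ε k = 1), x k := by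
      rw [← Finset.sum_filter_add_sum_filter_not F (fun k => ε k = 1) (fun k => ε k • x k),
        h1, h2, ← sub_eq_add_neg]
    rw [hrw]
    calc ‖_ - _‖ ≤ ‖∑ k ∈ F.filter (fun k => ε k = 1), x k‖
          + ‖∑ k ∈ F.filter (fun k => ¬ ε k = 1), x k‖ := norm_sub_le _ _
      _ ≤ C + C := add_le_add (hC _) (hC _)
      _ = 2 * C := by ring
  -- choose signs making the signed sum dominate the sum of squares
  have hsel : ∀ F : Finset ℤ, ∃ ε : ℤ → ℝ, (∀ k, ε k = 1 ∨ ε k = -1) ∧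
      ∑ k ∈ F, ‖x k‖ ^ 2 ≤ ‖∑ k ∈ F, ε k • x k‖ ^ 2 := by
    intro F
    induction F using Finset.induction_on with
    | empty => exact ⟨fun _ => 1, fun _ => Or.inl rfl, by simp⟩
    | insert _ _ ha ih =>
      rename_i a F
      obtain ⟨ε, hε, hle⟩ := ih
      set v := ∑ k ∈ F, ε k • x k with hv
      have par := parallelogram_law_with_norm ℂ v (x a)
      have key : ∀ r : ℝ, ∑ k ∈ insert a F, (fun k => if k = a then r else ε k) k • x k
          = r • x a + v := by
        intro r
        rw [Finset.sum_insert ha]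
        congr 1
        · simp
        · refine Finset.sum_congr rfl fun k hk => ?_
          have hka : k ≠ a := by rintro rfl; exact ha hk
          simp [hka]
      have hins : ∑ k ∈ insert a F, ‖x k‖ ^ 2 = ‖x a‖ ^ 2 + ∑ k ∈ F, ‖x k‖ ^ 2 :=
        Finset.sum_insert ha
      by_cases hcase : ‖v‖ ^ 2 + ‖x a‖ ^ 2 ≤ ‖v + x a‖ ^ 2
      · refine ⟨fun k => if k = a then 1 else ε k, fun k => ?_, ?_⟩
        · by_cases hk : k = a
          · subst hk; simp
          · simpa [hk] using hε k
        · rw [key 1, one_smul, add_comm (x a) v, hins]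
          linarith
      · refine ⟨fun k => if k = a then -1 else ε k, fun k => ?_, ?_⟩
        · by_cases hk : k = a
          · subst hk; simp
          · simpa [hk] using hε k
        · rw [key (-1), hins]
          have hne : (-1 : ℝ) • x a + v = v - x a := by
            rw [neg_one_smul]; abel
          rw [hne]
          nlinarith [sq_nonneg ‖v + x a‖]
  -- conclude
  have hC0 : 0 ≤ C := le_trans (norm_nonneg (∑ k ∈ (∅ : Finset ℤ), x k)) (hC ∅)
  refine summable_of_sum_le (c := (2 * C) ^ 2) (Pi.le_def.mpr fun k => sq_nonneg _) (fun F => ?_)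
  obtain ⟨ε, hε, hle⟩ := hsel F
  calc ∑ k ∈ F, ‖x k‖ ^ 2 ≤ ‖∑ k ∈ F, ε k • x k‖ ^ 2 := hle
    _ ≤ (2 * C) ^ 2 := by
        have := hsign F ε hε
        nlinarith [norm_nonneg (∑ k ∈ F, ε k • x k)]

/-- if `f` (continuous representative) belongs to a sampling space, then
the samples `{f(k)}` are square summable. -/
theorem stmt13 (φ s f : ℝ → ℂ) (hs : IsSamplingFunction φ s)
    (hf2 : L2fun f) (hfm : memSIS φ f) (hfc : Continuous f) :
    Summable (fun k : ℤ => ‖f k‖ ^ 2) := by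
  classical
  obtain ⟨g, hgc, hgf, _, hL2⟩ := hs.recon f hf2 hfm
  have hgfe : g = f := (Continuous.ae_eq_iff_eq volume hgc hfc).1 hgf
  subst hgfe
  have hs2 : L2fun s := hs.memV.1
  have htr : ∀ k : ℤ, MemLp (tr k s) 2 (volume : Measure ℝ) := fun k =>
    hs2.comp_measurePreserving (measurePreserving_sub_right volume (k : ℝ))
  set x : ℤ → Lp ℂ 2 (volume : Measure ℝ) :=
    fun k => (g k) • ((htr k).toLp (tr k s)) with hxdef
  set gL := hf2.toLp g with hgL
  have hcoe : ∀ F : Finset ℤ, (↑(∑ k ∈ F, x k) : ℝ → ℂ)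
      =ᵐ[volume] fun t => ∑ k ∈ F, g k * s (t - k) := by
    intro F
    induction F using Finset.induction_on with
    | empty => simpa [Pi.zero_def] using Lp.coeFn_zero ℂ 2 (volume : Measure ℝ)
    | insert _ _ ha ih =>
      rename_i a F
      rw [Finset.sum_insert ha]
      filter_upwards [Lp.coeFn_add (x a) (∑ k ∈ F, x k), ih,
        Lp.coeFn_smul (g a) ((htr a).toLp (tr a s)), (htr a).coeFn_toLp] with t h1 h2 h3 h4
      rw [h1, Pi.add_apply, h2, Finset.sum_insert ha, h3, Pi.smul_apply, h4]
      simp [tr, smul_eq_mul]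
  have hnorm : ∀ F : Finset ℤ, ‖gL - ∑ k ∈ F, x k‖
      = (eLpNorm (fun t => g t - ∑ k ∈ F, g k * s (t - k)) 2 (volume : Measure ℝ)).toReal := by
    intro F
    rw [Lp.norm_def]
    congr 1
    apply eLpNorm_congr_ae
    filter_upwards [Lp.coeFn_sub gL (∑ k ∈ F, x k), hf2.coeFn_toLp, hcoe F] with t h1 h2 h3
    rw [h1, Pi.sub_apply, h2, h3]
  have hnt : Tendsto (fun F : Finset ℤ => ‖gL - ∑ k ∈ F, x k‖) atTop (nhds 0) := by
    have := (ENNReal.tendsto_toReal (by simp : (0 : ENNReal) ≠ ⊤)).comp hL2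
    simpa [Function.comp_def, hnorm] using this
  have hsum : HasSum x gL := by
    rw [HasSum, tendsto_iff_norm_sub_tendsto_zero]
    simpa [norm_sub_rev] using hnt
  have horl := orlicz_sq_summable x hsum.summable
  set c : ℝ := (eLpNorm s 2 (volume : Measure ℝ)).toReal with hcdef
  have hxk : ∀ k : ℤ, ‖x k‖ = ‖g k‖ * c := by
    intro k
    rw [hxdef, norm_smul, Lp.norm_toLp]
    congr 2
    exact eLpNorm_comp_measurePreserving hs2.aestronglyMeasurable
      (measurePreserving_sub_right volume (k : ℝ))
  by_cases hc : c = 0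
  · have hx0 : ∀ k : ℤ, x k = 0 := by
      intro k
      rw [← norm_eq_zero, hxk k, hc, mul_zero]
    have hgL0 : gL = 0 := by
      have h0 : HasSum x 0 := by
        have : x = fun _ => (0 : Lp ℂ 2 (volume : Measure ℝ)) := funext hx0
        rw [this]; exact hasSum_zero
      exact hsum.unique h0
    have hgae : g =ᵐ[volume] (fun _ => (0 : ℂ)) := by
      have h1 : (↑gL : ℝ → ℂ) =ᵐ[volume] g := hf2.coeFn_toLp
      have h2 : (↑gL : ℝ → ℂ) =ᵐ[volume] (fun _ => (0 : ℂ)) := by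
        rw [hgL0]; exact Lp.coeFn_zero ℂ 2 (volume : Measure ℝ)
      exact h1.symm.trans h2
    have hg0 : g = fun _ => (0 : ℂ) :=
      (Continuous.ae_eq_iff_eq volume hfc continuous_const).1 hgae
    rw [hg0]
    simpa using summable_zero
  · have heq : (fun k : ℤ => ‖g k‖ ^ 2) = fun k : ℤ => ‖x k‖ ^ 2 * (c ^ 2)⁻¹ := by
      funext k
      rw [hxk k]
      field_simp
    rw [heq]
    exact horl.mul_right _
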